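/- Let T be a bounded linear operator on a complex Banach space X. If σ(T) is the disjoint union of σ_BW(T) and Π(T), then σ_BW(T) equals the Drazin spectrum σ_D(T) and σ_W(T) equals the Browder spectrum σ_B(T). -/

import Mathlib

open LinearMap Module

namespace SpectralPartition

variable {X : Type*} [NormedAddCommGroup X] [NormedSpace ℂ X] [CompleteSpace X]

/-- `T - λ I`. -/
noncomputable def lam (T : X →L[ℂ] X) (l : ℂ) : X →L[ℂ] X := T - l • (1 : X →L[ℂ] X)

/-- `T` maps the range of `T ^ n` into itself. -/
theorem maps_range_pow (T : X →L[ℂ] X) (n : ℕ) :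
    ∀ x ∈ LinearMap.range ((T ^ n : X →L[ℂ] X) : X →ₗ[ℂ] X), (T : X →ₗ[ℂ] X) x ∈ LinearMap.range ((T ^ n : X →L[ℂ] X) : X →ₗ[ℂ] X) := by
  rintro x ⟨y, rfl⟩
  refine ⟨T y, ?_⟩
  have h : T ^ n * T = T * T ^ n := by rw [← pow_succ, ← pow_succ']
  calc (T ^ n) (T y) = (T ^ n * T) y := (ContinuousLinearMap.mul_apply _ _ _).symm
    _ = (T * T ^ n) y := by rw [h]
    _ = T ((T ^ n) y) := ContinuousLinearMap.mul_apply _ _ _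

/-- The restriction `T_[n]` of `T` to the range of `T ^ n`. -/
noncomputable def restr (T : X →L[ℂ] X) (n : ℕ) :
    LinearMap.range ((T ^ n : X →L[ℂ] X) : X →ₗ[ℂ] X) →ₗ[ℂ] LinearMap.range ((T ^ n : X →L[ℂ] X) : X →ₗ[ℂ] X) :=
  (T : X →ₗ[ℂ] X).restrict (maps_range_pow T n)

/-- Weyl operator: Fredholm of index `0`. -/
def IsWeyl (T : X →L[ℂ] X) : Prop :=
  IsClosed ((LinearMap.range ((T : X →L[ℂ] X) : X →ₗ[ℂ] X) : Submodule ℂ X) : Set X) ∧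
  FiniteDimensional ℂ (LinearMap.ker ((T : X →L[ℂ] X) : X →ₗ[ℂ] X)) ∧
  FiniteDimensional ℂ (X ⧸ LinearMap.range ((T : X →L[ℂ] X) : X →ₗ[ℂ] X)) ∧
  finrank ℂ (LinearMap.ker ((T : X →L[ℂ] X) : X →ₗ[ℂ] X)) = finrank ℂ (X ⧸ LinearMap.range ((T : X →L[ℂ] X) : X →ₗ[ℂ] X))

/-- B-Weyl operator: for some `n`, `R(T^n)` is closed and `T_[n]` is Fredholm of index `0`. -/
def IsBWeyl (T : X →L[ℂ] X) : Prop :=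
  ∃ n : ℕ, IsClosed ((LinearMap.range ((T ^ n : X →L[ℂ] X) : X →ₗ[ℂ] X) : Submodule ℂ X) : Set X) ∧
    IsClosed ((LinearMap.range ((T ^ (n + 1) : X →L[ℂ] X) : X →ₗ[ℂ] X) : Submodule ℂ X) : Set X) ∧
    FiniteDimensional ℂ (LinearMap.ker (restr T n)) ∧
    FiniteDimensional ℂ (↥(LinearMap.range ((T ^ n : X →L[ℂ] X) : X →ₗ[ℂ] X)) ⧸ LinearMap.range (restr T n)) ∧
    finrank ℂ (LinearMap.ker (restr T n)) =
      finrank ℂ (↥(LinearMap.range ((T ^ n : X →L[ℂ] X) : X →ₗ[ℂ] X)) ⧸ LinearMap.range (restr T n))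

/-- Weyl spectrum. -/
noncomputable def σW (T : X →L[ℂ] X) : Set ℂ := {l | ¬ IsWeyl (lam T l)}

/-- B-Weyl spectrum. -/
noncomputable def σBW (T : X →L[ℂ] X) : Set ℂ := {l | ¬ IsBWeyl (lam T l)}

/-- `l` is an isolated point of the set `s`. -/
def IsolatedIn (l : ℂ) (s : Set ℂ) : Prop := l ∈ s ∧ ∃ U ∈ nhds l, U ∩ s = {l}

/-- Approximate point spectrum: `T - λ` is not bounded below. -/
noncomputable def σa (T : X →L[ℂ] X) : Set ℂ :=
  {l | ¬ ∃ c > (0 : ℝ), ∀ x : X, c * ‖x‖ ≤ ‖lam T l x‖}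

/-- Eigenvalues of `T` isolated in the spectrum. -/
noncomputable def Espec (T : X →L[ℂ] X) : Set ℂ :=
  {l | LinearMap.ker ((lam T l : X →L[ℂ] X) : X →ₗ[ℂ] X) ≠ ⊥ ∧ IsolatedIn l (spectrum ℂ T)}

/-- Eigenvalues of finite multiplicity isolated in the spectrum. -/
noncomputable def E0spec (T : X →L[ℂ] X) : Set ℂ :=
  {l | l ∈ Espec T ∧ FiniteDimensional ℂ (LinearMap.ker ((lam T l : X →L[ℂ] X) : X →ₗ[ℂ] X))}

/-- Eigenvalues of `T` isolated in the approximate point spectrum. -/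
noncomputable def Ea (T : X →L[ℂ] X) : Set ℂ :=
  {l | LinearMap.ker ((lam T l : X →L[ℂ] X) : X →ₗ[ℂ] X) ≠ ⊥ ∧ IsolatedIn l (σa T)}

/-- Eigenvalues of finite multiplicity isolated in the approximate point spectrum. -/
noncomputable def Ea0 (T : X →L[ℂ] X) : Set ℂ :=
  {l | l ∈ Ea T ∧ FiniteDimensional ℂ (LinearMap.ker ((lam T l : X →L[ℂ] X) : X →ₗ[ℂ] X))}

/-- The kernels of powers of `S` stabilize at `n` (ascent ≤ n). -/
def KerStab (S : X →L[ℂ] X) (n : ℕ) : Prop :=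
  LinearMap.ker ((S ^ n : X →L[ℂ] X) : X →ₗ[ℂ] X) = LinearMap.ker ((S ^ (n + 1) : X →L[ℂ] X) : X →ₗ[ℂ] X)

/-- The ranges of powers of `S` stabilize at `n` (descent ≤ n). -/
def RanStab (S : X →L[ℂ] X) (n : ℕ) : Prop :=
  LinearMap.range ((S ^ n : X →L[ℂ] X) : X →ₗ[ℂ] X) = LinearMap.range ((S ^ (n + 1) : X →L[ℂ] X) : X →ₗ[ℂ] X)

/-- Drazin invertible: finite ascent and finite descent. -/
def IsDrazinInv (S : X →L[ℂ] X) : Prop :=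
  (∃ n, KerStab S n) ∧ (∃ n, RanStab S n)

/-- `l` is a pole of the resolvent of `T`. -/
noncomputable def IsPole (T : X →L[ℂ] X) (l : ℂ) : Prop :=
  l ∈ spectrum ℂ T ∧ IsDrazinInv (lam T l)

/-- Set of poles of the resolvent of `T`. -/
noncomputable def Poles (T : X →L[ℂ] X) : Set ℂ := {l | IsPole T l}

/-- Set of poles of finite rank of `T`. -/
noncomputable def Poles0 (T : X →L[ℂ] X) : Set ℂ :=
  {l | IsPole T l ∧ FiniteDimensional ℂ (LinearMap.ker ((lam T l : X →L[ℂ] X) : X →ₗ[ℂ] X))}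

/-- Drazin spectrum. -/
noncomputable def σD (T : X →L[ℂ] X) : Set ℂ := {l | ¬ IsDrazinInv (lam T l)}

/-- Browder operator: Fredholm of finite ascent and descent. -/
def IsBrowder (S : X →L[ℂ] X) : Prop :=
  IsClosed ((LinearMap.range ((S : X →L[ℂ] X) : X →ₗ[ℂ] X) : Submodule ℂ X) : Set X) ∧
  FiniteDimensional ℂ (LinearMap.ker ((S : X →L[ℂ] X) : X →ₗ[ℂ] X)) ∧
  FiniteDimensional ℂ (X ⧸ LinearMap.range ((S : X →L[ℂ] X) : X →ₗ[ℂ] X)) ∧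
  (∃ n, KerStab S n) ∧ (∃ n, RanStab S n)

/-- Browder spectrum. -/
noncomputable def σB (T : X →L[ℂ] X) : Set ℂ := {l | ¬ IsBrowder (lam T l)}

/-- Upper semi-Weyl: upper semi-Fredholm with index ≤ 0. -/
def IsUpperSemiWeyl (S : X →L[ℂ] X) : Prop :=
  IsClosed ((LinearMap.range ((S : X →L[ℂ] X) : X →ₗ[ℂ] X) : Submodule ℂ X) : Set X) ∧
  FiniteDimensional ℂ (LinearMap.ker ((S : X →L[ℂ] X) : X →ₗ[ℂ] X)) ∧
  Module.rank ℂ (LinearMap.ker ((S : X →L[ℂ] X) : X →ₗ[ℂ] X)) ≤ Module.rank ℂ (X ⧸ LinearMap.range ((S : X →L[ℂ] X) : X →ₗ[ℂ] X))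

/-- Upper semi-Weyl spectrum `σ_{SF₊⁻}`. -/
noncomputable def σSF (T : X →L[ℂ] X) : Set ℂ := {l | ¬ IsUpperSemiWeyl (lam T l)}

/-- Upper semi-B-Weyl: for some `n`, `R(S^n)` is closed and `S_[n]` is
upper semi-Fredholm with index ≤ 0. -/
def IsUpperSemiBWeyl (S : X →L[ℂ] X) : Prop :=
  ∃ n : ℕ, IsClosed ((LinearMap.range ((S ^ n : X →L[ℂ] X) : X →ₗ[ℂ] X) : Submodule ℂ X) : Set X) ∧
    IsClosed ((LinearMap.range ((S ^ (n + 1) : X →L[ℂ] X) : X →ₗ[ℂ] X) : Submodule ℂ X) : Set X) ∧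
    FiniteDimensional ℂ (LinearMap.ker (restr S n)) ∧
    Module.rank ℂ (LinearMap.ker (restr S n)) ≤
      Module.rank ℂ (↥(LinearMap.range ((S ^ n : X →L[ℂ] X) : X →ₗ[ℂ] X)) ⧸ LinearMap.range (restr S n))

/-- Upper semi-B-Weyl spectrum `σ_{SBF₊⁻}`. -/
noncomputable def σSBF (T : X →L[ℂ] X) : Set ℂ := {l | ¬ IsUpperSemiBWeyl (lam T l)}

/-- `l` is a left pole of `T`: `l ∈ σ_a(T)`, the ascent `a` of `T - l` is finite
and `R((T-l)^{a+1})` is closed. -/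
noncomputable def IsLeftPole (T : X →L[ℂ] X) (l : ℂ) : Prop :=
  l ∈ σa T ∧ ∃ n : ℕ, KerStab (lam T l) n ∧ (∀ m < n, ¬ KerStab (lam T l) m) ∧
    IsClosed ((LinearMap.range (((lam T l) ^ (n + 1) : X →L[ℂ] X) : X →ₗ[ℂ] X) : Submodule ℂ X) : Set X)

/-- Set of left poles of `T`. -/
noncomputable def PolesA (T : X →L[ℂ] X) : Set ℂ := {l | IsLeftPole T l}

/-- Set of left poles of `T` of finite rank. -/
noncomputable def PolesA0 (T : X →L[ℂ] X) : Set ℂ :=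
  {l | IsLeftPole T l ∧ FiniteDimensional ℂ (LinearMap.ker ((lam T l : X →L[ℂ] X) : X →ₗ[ℂ] X))}


lemma pow_apply_add (S : X →L[ℂ] X) (a b : ℕ) (x : X) :
    (S ^ (a + b)) x = (S ^ a) ((S ^ b) x) := by
  rw [pow_add, ContinuousLinearMap.mul_apply]

lemma ker_pow_mono (S : X →L[ℂ] X) {a b : ℕ} (h : a ≤ b) :
    LinearMap.ker ((S ^ a : X →L[ℂ] X) : X →ₗ[ℂ] X) ≤ LinearMap.ker ((S ^ b : X →L[ℂ] X) : X →ₗ[ℂ] X) := by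
  intro x hx
  obtain ⟨c, rfl⟩ := Nat.exists_eq_add_of_le h
  have hx' : (S ^ a) x = 0 := hx
  show (S ^ (a + c)) x = 0
  rw [add_comm, pow_apply_add, hx', map_zero]

lemma range_pow_mono (S : X →L[ℂ] X) {a b : ℕ} (h : a ≤ b) :
    LinearMap.range ((S ^ b : X →L[ℂ] X) : X →ₗ[ℂ] X) ≤ LinearMap.range ((S ^ a : X →L[ℂ] X) : X →ₗ[ℂ] X) := by
  rintro x ⟨y, rfl⟩
  obtain ⟨c, rfl⟩ := Nat.exists_eq_add_of_le h
  exact ⟨(S ^ c) y, (pow_apply_add S a c y).symm⟩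

lemma ker_stab_ge (S : X →L[ℂ] X) {n : ℕ} (h : KerStab S n) {k : ℕ} (hk : n ≤ k) :
    LinearMap.ker ((S ^ k : X →L[ℂ] X) : X →ₗ[ℂ] X) = LinearMap.ker ((S ^ n : X →L[ℂ] X) : X →ₗ[ℂ] X) := by
  obtain ⟨c, rfl⟩ := Nat.exists_eq_add_of_le hk
  induction c with
  | zero => rfl
  | succ c ih =>
    refine le_antisymm ?_ (ker_pow_mono S (Nat.le_add_right _ _))
    intro x hx
    rw [← ih (Nat.le_add_right _ _)]
    have h1 : (S ^ (n + 1)) ((S ^ c) x) = 0 := by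
      have h2 : (S ^ (n + (c + 1))) x = 0 := hx
      rw [show n + (c + 1) = (n + 1) + c by omega, pow_apply_add] at h2
      exact h2
    have h2 : (S ^ c) x ∈ LinearMap.ker ((S ^ n : X →L[ℂ] X) : X →ₗ[ℂ] X) := by
      rw [KerStab] at h; rw [h]; exact h1
    show (S ^ (n + c)) x = 0
    rw [pow_apply_add]
    exact h2

lemma range_stab_ge (S : X →L[ℂ] X) {n : ℕ} (h : RanStab S n) {k : ℕ} (hk : n ≤ k) :
    LinearMap.range ((S ^ k : X →L[ℂ] X) : X →ₗ[ℂ] X) = LinearMap.range ((S ^ n : X →L[ℂ] X) : X →ₗ[ℂ] X) := by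
  obtain ⟨c, rfl⟩ := Nat.exists_eq_add_of_le hk
  induction c with
  | zero => rfl
  | succ c ih =>
    refine le_antisymm (range_pow_mono S (Nat.le_add_right _ _)) ?_
    intro x hx
    rw [← ih (Nat.le_add_right _ _)] at hx
    obtain ⟨y, rfl⟩ := hx
    obtain ⟨z, hz⟩ : (S ^ n) y ∈ LinearMap.range ((S ^ (n + 1) : X →L[ℂ] X) : X →ₗ[ℂ] X) := by
      rw [RanStab] at h; rw [← h]; exact ⟨y, rfl⟩
    refine ⟨z, ?_⟩
    show (S ^ (n + (c + 1))) z = (S ^ (n + c)) y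
    rw [show n + (c + 1) = c + (n + 1) by omega, pow_apply_add, (show (S ^ (n + 1)) z = (S ^ n) y from hz),
      show n + c = c + n by omega, pow_apply_add]

lemma fd_of_fd_fd {V : Type*} [AddCommGroup V] [Module ℂ V] (p : Submodule ℂ V)
    (h1 : FiniteDimensional ℂ p) (h2 : FiniteDimensional ℂ (V ⧸ p)) :
    FiniteDimensional ℂ V := by
  have h := Submodule.rank_quotient_add_rank p
  have hlt : Module.rank ℂ V < Cardinal.aleph0 := by
    rw [← h]
    exact Cardinal.add_lt_aleph0 (rank_lt_aleph0 ℂ _) (rank_lt_aleph0 ℂ _)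
  exact IsNoetherian.iff_fg.1 <| IsNoetherian.iff_rank_lt_aleph0.2 hlt

lemma fd_comap_subtype {V : Type*} [AddCommGroup V] [Module ℂ V] (p q : Submodule ℂ V)
    [FiniteDimensional ℂ q] : FiniteDimensional ℂ (Submodule.comap p.subtype q) := by
  let j : (Submodule.comap p.subtype q) →ₗ[ℂ] q :=
    LinearMap.codRestrict q (p.subtype.comp (Submodule.comap p.subtype q).subtype)
      (fun x => x.2)
  have hj : Function.Injective j := by
    intro a b hab
    have h1 : ((j a : q) : V) = ((j b : q) : V) := congrArg Subtype.val hab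
    exact Subtype.ext (Subtype.ext h1)
  exact FiniteDimensional.of_injective j hj

lemma fd_ker_pow (S : X →L[ℂ] X) (hk : FiniteDimensional ℂ (LinearMap.ker ((S : X →L[ℂ] X) : X →ₗ[ℂ] X))) (k : ℕ) :
    FiniteDimensional ℂ (LinearMap.ker ((S ^ k : X →L[ℂ] X) : X →ₗ[ℂ] X)) := by
  induction k with
  | zero =>
    have h0 : LinearMap.ker ((S ^ 0 : X →L[ℂ] X) : X →ₗ[ℂ] X) = ⊥ := by
      rw [pow_zero]; ext x; simp [ContinuousLinearMap.one_def]
    rw [h0]; infer_instance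
  | succ k ih =>
    set p := LinearMap.ker ((S ^ (k + 1) : X →L[ℂ] X) : X →ₗ[ℂ] X) with hp
    let g : p →ₗ[ℂ] X := ((S ^ k : X →L[ℂ] X) : X →ₗ[ℂ] X).domRestrict p
    have hker : LinearMap.ker g =
        Submodule.comap p.subtype (LinearMap.ker ((S ^ k : X →L[ℂ] X) : X →ₗ[ℂ] X)) := LinearMap.ker_domRestrict p _
    have hrange : LinearMap.range g ≤ LinearMap.ker ((S : X →L[ℂ] X) : X →ₗ[ℂ] X) := by
      rintro x ⟨⟨y, hy⟩, rfl⟩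
      show S ((S ^ k) y) = 0
      rw [← ContinuousLinearMap.mul_apply, ← pow_succ']
      exact hy
    haveI hfk : FiniteDimensional ℂ (LinearMap.ker g) := by
      rw [hker]
      haveI := ih
      exact fd_comap_subtype p _
    haveI hfr : FiniteDimensional ℂ (LinearMap.range g) :=
      Submodule.finiteDimensional_of_le hrange
    haveI hfq : FiniteDimensional ℂ (p ⧸ LinearMap.ker g) :=
      (g.quotKerEquivRange).symm.finiteDimensional
    exact fd_of_fd_fd (LinearMap.ker g) hfk hfq

lemma finrank_eq_of_browder (S : X →L[ℂ] X)
    (hk : FiniteDimensional ℂ (LinearMap.ker ((S : X →L[ℂ] X) : X →ₗ[ℂ] X)))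
    (ha : ∃ n, KerStab S n) (hd : ∃ n, RanStab S n) :
    finrank ℂ (LinearMap.ker ((S : X →L[ℂ] X) : X →ₗ[ℂ] X)) = finrank ℂ (X ⧸ LinearMap.range ((S : X →L[ℂ] X) : X →ₗ[ℂ] X)) := by
  obtain ⟨n, hn⟩ := ha
  obtain ⟨m, hm⟩ := hd
  set p := max n m + 1 with hp
  have hnp : n ≤ p := (le_max_left n m).trans (Nat.le_succ _)
  have hmp : m ≤ p := (le_max_right n m).trans (Nat.le_succ _)
  have hp1 : 1 ≤ p := hp ▸ Nat.succ_le_succ (Nat.zero_le _)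
  clear_value p
  have hker2 : LinearMap.ker ((S ^ (p + p) : X →L[ℂ] X) : X →ₗ[ℂ] X) = LinearMap.ker ((S ^ p : X →L[ℂ] X) : X →ₗ[ℂ] X) := by
    rw [ker_stab_ge S hn (hnp.trans (by omega)), ker_stab_ge S hn hnp]
  have hran2 : LinearMap.range ((S ^ (p + p) : X →L[ℂ] X) : X →ₗ[ℂ] X) = LinearMap.range ((S ^ p : X →L[ℂ] X) : X →ₗ[ℂ] X) := by
    rw [range_stab_ge S hm (hmp.trans (by omega)), range_stab_ge S hm hmp]
  set N := LinearMap.ker ((S ^ p : X →L[ℂ] X) : X →ₗ[ℂ] X) with hN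
  haveI hNfd : FiniteDimensional ℂ N := fd_ker_pow S hk p
  have hmapsN : ∀ x ∈ N, (S : X →ₗ[ℂ] X) x ∈ N := by
    intro x hx
    show (S ^ p) (S x) = 0
    have h1 : (S ^ (p + 1)) x = 0 := ker_pow_mono S (Nat.le_succ p) hx
    rw [pow_succ, ContinuousLinearMap.mul_apply] at h1
    exact h1
  set r : N →ₗ[ℂ] N := (S : X →ₗ[ℂ] X).restrict hmapsN with hr
  have hK1 : LinearMap.ker ((S : X →L[ℂ] X) : X →ₗ[ℂ] X) ≤ N := by
    have h1 := ker_pow_mono S hp1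
    rwa [pow_one] at h1
  have hK2 : LinearMap.range ((S ^ p : X →L[ℂ] X) : X →ₗ[ℂ] X) ≤ LinearMap.range ((S : X →L[ℂ] X) : X →ₗ[ℂ] X) := by
    have h1 := range_pow_mono S hp1
    rwa [pow_one] at h1
  -- complement: every x decomposes as k + (range S^p) element
  have hK3 : ∀ x : X, ∃ k ∈ N, x - k ∈ LinearMap.range ((S ^ p : X →L[ℂ] X) : X →ₗ[ℂ] X) := by
    intro x
    obtain ⟨z, hz⟩ : (S ^ p) x ∈ LinearMap.range ((S ^ (p + p) : X →L[ℂ] X) : X →ₗ[ℂ] X) := by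
      rw [hran2]; exact ⟨x, rfl⟩
    refine ⟨x - (S ^ p) z, ?_, ⟨z, by show (S ^ p) z = x - (x - (S ^ p) z); abel⟩⟩
    show (S ^ p) (x - (S ^ p) z) = 0
    rw [map_sub, ← pow_apply_add, (show (S ^ (p + p)) z = (S ^ p) x from hz), sub_self]
  -- triviality of N ⊓ range (S^p)
  have hK5 : ∀ w, w ∈ N → w ∈ LinearMap.range ((S ^ p : X →L[ℂ] X) : X →ₗ[ℂ] X) → w = 0 := by
    intro w hw hwr
    obtain ⟨u, rfl⟩ := hwr
    have h1 : (S ^ (p + p)) u = 0 := by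
      rw [pow_apply_add]; exact hw
    have h2 : u ∈ LinearMap.ker ((S ^ (p + p) : X →L[ℂ] X) : X →ₗ[ℂ] X) := h1
    rw [hker2, hN] at h2
    exact h2
  -- key: N ∩ range S ⊆ S(N)
  have hK4 : ∀ x, x ∈ N → x ∈ LinearMap.range ((S : X →L[ℂ] X) : X →ₗ[ℂ] X) → ∃ y ∈ N, S y = x := by
    intro x hxN hxr
    obtain ⟨y, rfl⟩ := hxr
    obtain ⟨z, hz⟩ : (S ^ p) y ∈ LinearMap.range ((S ^ (p + p) : X →L[ℂ] X) : X →ₗ[ℂ] X) := by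
      rw [hran2]; exact ⟨y, rfl⟩
    have hkN : y - (S ^ p) z ∈ N := by
      show (S ^ p) (y - (S ^ p) z) = 0
      rw [map_sub, ← pow_apply_add, (show (S ^ (p + p)) z = (S ^ p) y from hz), sub_self]
    refine ⟨y - (S ^ p) z, hkN, ?_⟩
    have hS1 : S (y - (S ^ p) z) ∈ N := hmapsN _ hkN
    have hdiff : S y - S (y - (S ^ p) z) = (S ^ (p + 1)) z := by
      rw [map_sub, sub_sub_cancel, pow_succ', ContinuousLinearMap.mul_apply]
    have hmemN : (S ^ (p + 1)) z ∈ N := by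
      rw [← hdiff]
      exact sub_mem hxN hS1
    have hmemR : (S ^ (p + 1)) z ∈ LinearMap.range ((S ^ p : X →L[ℂ] X) : X →ₗ[ℂ] X) :=
      range_pow_mono S (Nat.le_succ p) ⟨z, rfl⟩
    have hz0 : (S ^ (p + 1)) z = 0 := hK5 _ hmemN hmemR
    exact (sub_eq_zero.mp (hdiff.trans hz0)).symm
  set q : N →ₗ[ℂ] (X ⧸ LinearMap.range ((S : X →L[ℂ] X) : X →ₗ[ℂ] X)) :=
    ((LinearMap.range ((S : X →L[ℂ] X) : X →ₗ[ℂ] X) : Submodule ℂ X)).mkQ.comp N.subtype with hq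
  have hqsurj : Function.Surjective q := by
    intro w
    obtain ⟨x, rfl⟩ := Submodule.mkQ_surjective _ w
    obtain ⟨k, hkN, hkr⟩ := hK3 x
    refine ⟨⟨k, hkN⟩, ?_⟩
    simp only [hq, LinearMap.comp_apply, Submodule.mkQ_apply, Submodule.subtype_apply]
    rw [Submodule.Quotient.eq]
    have h1 : x - k ∈ LinearMap.range ((S : X →L[ℂ] X) : X →ₗ[ℂ] X) := hK2 hkr
    have h2 := neg_mem h1
    rwa [neg_sub] at h2
  have hqker : LinearMap.ker q = LinearMap.range r := by
    ext x
    obtain ⟨x, hxN⟩ := x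
    constructor
    · intro hx
      have hxr : (x : X) ∈ LinearMap.range ((S : X →L[ℂ] X) : X →ₗ[ℂ] X) := by
        have h1 : q ⟨x, hxN⟩ = 0 := hx
        simp only [hq, LinearMap.comp_apply, Submodule.mkQ_apply,
          Submodule.subtype_apply] at h1
        rwa [Submodule.Quotient.mk_eq_zero] at h1
      obtain ⟨y, hyN, hyx⟩ := hK4 x hxN hxr
      exact ⟨⟨y, hyN⟩, Subtype.ext hyx⟩
    · rintro ⟨⟨y, hyN⟩, hEq⟩
      have h1 : S y = x := congrArg Subtype.val hEq
      show q ⟨x, hxN⟩ = 0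
      simp only [hq, LinearMap.comp_apply, Submodule.mkQ_apply, Submodule.subtype_apply]
      rw [Submodule.Quotient.mk_eq_zero]
      exact ⟨y, h1⟩
  have hrk : LinearMap.ker r = Submodule.comap N.subtype (LinearMap.ker ((S : X →L[ℂ] X) : X →ₗ[ℂ] X)) := by
    simp only [hr]
    exact LinearMap.ker_restrict hmapsN
  have e2 : finrank ℂ (LinearMap.ker r) = finrank ℂ (LinearMap.ker ((S : X →L[ℂ] X) : X →ₗ[ℂ] X)) := by
    rw [hrk]
    exact (Submodule.comapSubtypeEquivOfLe hK1).finrank_eq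
  have h1 := LinearMap.finrank_range_add_finrank_ker q
  have h2 := LinearMap.finrank_range_add_finrank_ker r
  have e1 : LinearMap.range q = ⊤ := LinearMap.range_eq_top.mpr hqsurj
  rw [e1, finrank_top, hqker] at h1
  rw [e2] at h2
  omega

lemma isBWeyl_of_isWeyl {S : X →L[ℂ] X} (h : IsWeyl S) : IsBWeyl S := by
  obtain ⟨hc, hk, hqfd, hfr⟩ := h
  haveI : FiniteDimensional ℂ (LinearMap.ker (S : X →ₗ[ℂ] X)) := hk
  haveI := hqfd
  have hM : LinearMap.range ((S ^ 0 : X →L[ℂ] X) : X →ₗ[ℂ] X) = ⊤ := by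
    rw [pow_zero]; ext x; simp [ContinuousLinearMap.one_def]
  have hle : LinearMap.ker (S : X →ₗ[ℂ] X) ≤ LinearMap.range ((S ^ 0 : X →L[ℂ] X) : X →ₗ[ℂ] X) := by
    rw [hM]; exact le_top
  have hker : LinearMap.ker (restr S 0) =
      Submodule.comap (LinearMap.range ((S ^ 0 : X →L[ℂ] X) : X →ₗ[ℂ] X)).subtype
        (LinearMap.ker (S : X →ₗ[ℂ] X)) :=
    LinearMap.ker_restrict (maps_range_pow S 0)
  have e1 : (LinearMap.ker (restr S 0)) ≃ₗ[ℂ] (LinearMap.ker (S : X →ₗ[ℂ] X)) :=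
    (LinearEquiv.ofEq _ _ hker).trans (Submodule.comapSubtypeEquivOfLe hle)
  set φ : (LinearMap.range ((S ^ 0 : X →L[ℂ] X) : X →ₗ[ℂ] X)) →ₗ[ℂ] (X ⧸ LinearMap.range ((S : X →L[ℂ] X) : X →ₗ[ℂ] X)) :=
    ((LinearMap.range ((S : X →L[ℂ] X) : X →ₗ[ℂ] X) : Submodule ℂ X)).mkQ.comp
      (LinearMap.range ((S ^ 0 : X →L[ℂ] X) : X →ₗ[ℂ] X)).subtype with hφ
  have hφs : Function.Surjective φ := by
    intro w
    obtain ⟨x, rfl⟩ := Submodule.mkQ_surjective _ w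
    exact ⟨⟨x, by rw [hM]; trivial⟩, rfl⟩
  have hφk : LinearMap.ker φ = LinearMap.range (restr S 0) := by
    ext x
    obtain ⟨x, hx⟩ := x
    constructor
    · intro hxk
      have h1 : φ ⟨x, hx⟩ = 0 := hxk
      simp only [hφ, LinearMap.comp_apply, Submodule.mkQ_apply, Submodule.subtype_apply] at h1
      rw [Submodule.Quotient.mk_eq_zero] at h1
      obtain ⟨y, hy⟩ := h1
      exact ⟨⟨y, by rw [hM]; trivial⟩, Subtype.ext hy⟩
    · rintro ⟨⟨y, hy⟩, hEq⟩
      have h1 : S y = x := congrArg Subtype.val hEq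
      show φ ⟨x, hx⟩ = 0
      simp only [hφ, LinearMap.comp_apply, Submodule.mkQ_apply, Submodule.subtype_apply]
      rw [Submodule.Quotient.mk_eq_zero]
      exact ⟨y, h1⟩
  have e2 : ((LinearMap.range ((S ^ 0 : X →L[ℂ] X) : X →ₗ[ℂ] X)) ⧸ LinearMap.range (restr S 0)) ≃ₗ[ℂ]
      (X ⧸ LinearMap.range ((S : X →L[ℂ] X) : X →ₗ[ℂ] X)) :=
    (Submodule.quotEquivOfEq _ _ hφk.symm).trans (φ.quotKerEquivOfSurjective hφs)
  refine ⟨0, ?_, ?_, ?_, ?_, ?_⟩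
  · rw [hM]; simp
  · simp only [zero_add, pow_one]; exact hc
  · exact e1.symm.finiteDimensional
  · exact e2.symm.finiteDimensional
  · rw [e1.finrank_eq, e2.finrank_eq]
    exact hfr

lemma bij_of_not_mem {T : X →L[ℂ] X} {l : ℂ} (h : l ∉ spectrum ℂ T) :
    LinearMap.ker ((lam T l : X →L[ℂ] X) : X →ₗ[ℂ] X) = ⊥ ∧ LinearMap.range ((lam T l : X →L[ℂ] X) : X →ₗ[ℂ] X) = ⊤ := by
  have hu : IsUnit ((algebraMap ℂ (X →L[ℂ] X)) l - T) := spectrum.notMem_iff.mp h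
  have hu2 : IsUnit (lam T l) := by
    have heq : lam T l = -((algebraMap ℂ (X →L[ℂ] X)) l - T) := by
      rw [lam, Algebra.algebraMap_eq_smul_one, neg_sub]
    rw [heq]; exact hu.neg
  obtain ⟨v, hv⟩ := hu2
  have hinj : Function.Injective (lam T l) := by
    intro a b hab
    have h1 : (v.inv * v.val) a = (v.inv * v.val) b := by
      rw [ContinuousLinearMap.mul_apply, ContinuousLinearMap.mul_apply, hv, hab]
    rwa [v.inv_val, ContinuousLinearMap.one_apply, ContinuousLinearMap.one_apply] at h1
  have hsurj : Function.Surjective (lam T l) := by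
    intro x
    refine ⟨v.inv x, ?_⟩
    calc (lam T l) (v.inv x) = (v.val * v.inv) x := by
          rw [ContinuousLinearMap.mul_apply, hv]
      _ = x := by rw [v.val_inv, ContinuousLinearMap.one_apply]
  exact ⟨LinearMap.ker_eq_bot.mpr hinj, LinearMap.range_eq_top.mpr hsurj⟩

lemma isDrazin_of_not_mem {T : X →L[ℂ] X} {l : ℂ} (h : l ∉ spectrum ℂ T) :
    IsDrazinInv (lam T l) := by
  obtain ⟨hker, hran⟩ := bij_of_not_mem h
  constructor
  · refine ⟨0, ?_⟩
    show LinearMap.ker (((lam T l) ^ 0 : X →L[ℂ] X) : X →ₗ[ℂ] X) = LinearMap.ker (((lam T l) ^ 1 : X →L[ℂ] X) : X →ₗ[ℂ] X)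
    rw [pow_zero, pow_one, hker]
    ext x; simp [ContinuousLinearMap.one_def]
  · refine ⟨0, ?_⟩
    show LinearMap.range (((lam T l) ^ 0 : X →L[ℂ] X) : X →ₗ[ℂ] X) = LinearMap.range (((lam T l) ^ 1 : X →L[ℂ] X) : X →ₗ[ℂ] X)
    rw [pow_zero, pow_one, hran]
    ext x; simp [ContinuousLinearMap.one_def]

lemma isWeyl_of_not_mem {T : X →L[ℂ] X} {l : ℂ} (h : l ∉ spectrum ℂ T) :
    IsWeyl (lam T l) := by
  obtain ⟨hker, hran⟩ := bij_of_not_mem h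
  haveI hsub : Subsingleton (X ⧸ LinearMap.range ((lam T l : X →L[ℂ] X) : X →ₗ[ℂ] X)) :=
    Submodule.Quotient.subsingleton_iff.mpr hran
  refine ⟨?_, ?_, ?_, ?_⟩
  · rw [hran]; simp
  · rw [hker]; infer_instance
  · infer_instance
  · rw [hker]
    rw [finrank_bot]
    exact (finrank_zero_of_subsingleton).symm

lemma isBrowder_of_not_mem {T : X →L[ℂ] X} {l : ℂ} (h : l ∉ spectrum ℂ T) :
    IsBrowder (lam T l) := by
  obtain ⟨hc, hk, hq, _⟩ := isWeyl_of_not_mem h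
  obtain ⟨ha, hd⟩ := isDrazin_of_not_mem h
  exact ⟨hc, hk, hq, ha, hd⟩

end SpectralPartition

open SpectralPartition in
/-- If generalized Browder's theorem holds for `T`, then the B-Weyl spectrum equals the
Drazin spectrum and the Weyl spectrum equals the Browder spectrum. -/
theorem gen_browder_spectra_eq {X : Type*} [NormedAddCommGroup X] [NormedSpace ℂ X]
    [CompleteSpace X] (T : X →L[ℂ] X)
    (hU : spectrum ℂ T = σBW T ∪ Poles T) (hD : σBW T ∩ Poles T = ∅) :
    σBW T = σD T ∧ σW T = σB T := by
  have hdis : ∀ l, l ∈ σBW T → l ∉ Poles T := by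
    intro l h1 h2
    have h3 : l ∈ σBW T ∩ Poles T := ⟨h1, h2⟩
    rw [hD] at h3
    exact h3
  constructor
  · ext l
    simp only [σBW, σD, Set.mem_setOf_eq]
    constructor
    · intro hl
      have hσ : l ∈ spectrum ℂ T := by
        by_contra hn
        exact hl (isBWeyl_of_isWeyl (isWeyl_of_not_mem hn))
      intro hdr
      exact hdis l hl ⟨hσ, hdr⟩
    · intro hl
      have hσ : l ∈ spectrum ℂ T := by
        by_contra hn
        exact hl (isDrazin_of_not_mem hn)
      rcases (hU ▸ hσ : l ∈ σBW T ∪ Poles T) with h | h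
      · exact h
      · exact absurd h.2 hl
  · ext l
    simp only [σW, σB, Set.mem_setOf_eq]
    constructor
    · intro hl hb
      obtain ⟨hc, hk, hq, ha, hd⟩ := hb
      exact hl ⟨hc, hk, hq, finrank_eq_of_browder _ hk ha hd⟩
    · intro hl hw
      apply hl
      by_cases hσ : l ∈ spectrum ℂ T
      · have hnbw : l ∉ σBW T := fun hbw => hbw (isBWeyl_of_isWeyl hw)
        have hp : l ∈ Poles T := by
          rcases (hU ▸ hσ : l ∈ σBW T ∪ Poles T) with h | h
          · exact absurd h hnbw
          · exact h
        obtain ⟨-, ha, hd⟩ := hp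
        exact ⟨hw.1, hw.2.1, hw.2.2.1, ha, hd⟩
      · exact isBrowder_of_not_mem hσ
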